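/- The wrapped centered Gaussian distribution on the circle converges weakly to the uniform distribution as the standard deviation tends to infinity: letting P σ denote the pushforward of gaussianReal 0 (σ²) under the quotient map ℝ → AddCircle 1, viewed as a probability measure on AddCircle 1, one has P σ → (uniform) Haar probability measure on AddCircle 1 in the topology of weak convergence of probability measures, as σ → ∞. -/

import Mathlib

open MeasureTheory ProbabilityTheory Filter Topology

/-- The wrapped centered Gaussian probability measure on the circle `ℝ/ℤ`, with standard
deviation `σ`. -/
noncomputable def wrappedGaussian (σ : ℝ) : ProbabilityMeasure (AddCircle (1 : ℝ)) :=
  ProbabilityMeasure.map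
    ⟨gaussianReal 0 (⟨σ ^ 2, sq_nonneg σ⟩ : NNReal), instIsProbabilityMeasureGaussianReal _ _⟩
    (f := fun x : ℝ => (x : AddCircle (1 : ℝ)))
    ((AddCircle.continuous_mk' 1).measurable.aemeasurable)

/-- The Haar probability measure (uniform distribution) on the circle `ℝ/ℤ`. -/
noncomputable def uniformCircle : ProbabilityMeasure (AddCircle (1 : ℝ)) :=
  ⟨(volume : Measure (AddCircle (1 : ℝ))), by
    constructor
    rw [AddCircle.measure_univ]
    simp⟩

section Aux

open Complex Real
open scoped NNReal ENNReal

local instance : Fact ((0:ℝ) < 1) := ⟨one_pos⟩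

/-- Characteristic-function-type integral of the centered Gaussian. -/
lemma gaussian_charFun_aux (v : ℝ≥0) (hv : v ≠ 0) (c : ℂ) :
    ∫ x : ℝ, Complex.exp (c * x) ∂(gaussianReal 0 v) = Complex.exp (c ^ 2 * v / 2) := by
  have hv0 : (0 : ℝ) < (v : ℝ) := lt_of_le_of_ne v.coe_nonneg (by exact_mod_cast hv.symm)
  have hvC : ((v : ℝ) : ℂ) ≠ 0 := by exact_mod_cast hv0.ne'
  have hmeas : Measurable fun x => (gaussianPDFReal 0 v x).toNNReal :=
    (measurable_gaussianPDFReal 0 v).real_toNNReal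
  have hrepr : gaussianReal 0 v
      = volume.withDensity (fun x => ((gaussianPDFReal 0 v x).toNNReal : ℝ≥0∞)) := by
    rw [gaussianReal_of_var_ne_zero 0 hv]; rfl
  rw [hrepr, integral_withDensity_eq_integral_smul hmeas]
  have hb : (-(1 / (2 * ((v : ℝ) : ℂ)))).re < 0 := by
    rw [show -(1 / (2 * ((v : ℝ) : ℂ))) = ((-(1 / (2 * (v : ℝ))) : ℝ) : ℂ) by push_cast; ring,
      Complex.ofReal_re]
    exact neg_lt_zero.mpr (by positivity)
  have key : ∀ x : ℝ, ((gaussianPDFReal 0 v x).toNNReal : ℝ≥0) • Complex.exp (c * x)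
      = ((Real.sqrt (2 * π * v) : ℝ) : ℂ)⁻¹
        * Complex.exp (-(1 / (2 * ((v : ℝ) : ℂ))) * (x : ℂ) ^ 2 + c * x + 0) := by
    intro x
    rw [NNReal.smul_def, Real.coe_toNNReal _ (gaussianPDFReal_nonneg 0 v x)]
    rw [gaussianPDFReal, Complex.real_smul]
    push_cast
    rw [mul_assoc, ← Complex.exp_add]
    congr 2
    field_simp
    ring
  simp_rw [key]
  rw [integral_const_mul, integral_cexp_quadratic hb c 0]
  have h1 : (↑π / -(-(1 / (2 * ((v : ℝ) : ℂ))))) = (((2 * π * v : ℝ)) : ℂ) := by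
    push_cast; field_simp
  have h2 : ((((2 * π * v : ℝ)) : ℂ)) ^ (1 / 2 : ℂ) = ((Real.sqrt (2 * π * v) : ℝ) : ℂ) := by
    rw [show (1 / 2 : ℂ) = ((1 / 2 : ℝ) : ℂ) by norm_num,
      ← Complex.ofReal_cpow (by positivity)]
    norm_num [Real.sqrt_eq_rpow]
  have hs : ((Real.sqrt (2 * π * v) : ℝ) : ℂ) ≠ 0 := by
    have : (0:ℝ) < Real.sqrt (2 * π * v) := Real.sqrt_pos.mpr (by positivity)
    exact_mod_cast this.ne'
  rw [h1, h2, ← mul_assoc, inv_mul_cancel₀ hs, one_mul]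
  congr 1
  field_simp
  ring

/-- The integral of a nontrivial character against the uniform measure vanishes. -/
lemma integral_fourier_uniform_aux (n : ℤ) (hn : n ≠ 0) :
    ∫ z, fourier n z ∂(uniformCircle : Measure (AddCircle (1:ℝ))) = 0 := by
  have hc : (2 * ↑π * Complex.I * n : ℂ) ≠ 0 := by
    simp [Complex.I_ne_zero, Real.pi_ne_zero, hn]
  show ∫ z, fourier n z ∂(volume : Measure (AddCircle (1:ℝ))) = 0
  rw [← AddCircle.integral_preimage (1:ℝ) 0 (fun z => fourier n z)]
  rw [← intervalIntegral.integral_of_le (by norm_num : (0:ℝ) ≤ 0 + 1)]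
  have h : ∀ x : ℝ, fourier n (x : AddCircle (1:ℝ))
      = Complex.exp ((2 * ↑π * Complex.I * n) * x) := by
    intro x
    rw [fourier_coe_apply]
    push_cast
    ring_nf
  simp_rw [h]
  rw [integral_exp_mul_complex hc]
  have h1 : Complex.exp ((2 * ↑π * Complex.I * n) * ((0:ℝ) + 1 : ℝ)) = 1 := by
    push_cast
    rw [show (2 * ↑π * Complex.I * n * (0 + 1) : ℂ) = n * (2 * ↑π * Complex.I) by ring]
    exact Complex.exp_int_mul_two_pi_mul_I n
  rw [h1]
  simp

/-- The integral of a character against the wrapped Gaussian. -/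
lemma integral_fourier_wrapped_aux (n : ℤ) {σ : ℝ} (hσ : σ ≠ 0) :
    ∫ z, fourier n z ∂(wrappedGaussian σ : Measure (AddCircle (1:ℝ)))
      = Complex.exp (-(2 * π ^ 2 * n ^ 2 * σ ^ 2)) := by
  have hv : (⟨σ ^ 2, sq_nonneg σ⟩ : ℝ≥0) ≠ 0 := by
    intro hcon
    exact pow_ne_zero 2 hσ (congrArg NNReal.toReal hcon)
  rw [show (wrappedGaussian σ : Measure (AddCircle (1:ℝ))) = (gaussianReal 0 (⟨σ ^ 2, sq_nonneg σ⟩ : ℝ≥0)).map (fun x : ℝ => (x : AddCircle (1:ℝ))) from rfl]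
  rw [integral_map (show AEMeasurable (fun x : ℝ => (x : AddCircle (1:ℝ))) _ from
      (AddCircle.continuous_mk' 1).measurable.aemeasurable)
    (fourier n).continuous.aestronglyMeasurable]
  have h : ∀ x : ℝ, fourier n (x : AddCircle (1:ℝ))
      = Complex.exp ((2 * ↑π * Complex.I * n) * x) := by
    intro x
    rw [fourier_coe_apply]
    push_cast
    ring_nf
  simp_rw [h]
  have key : ∫ x : ℝ, Complex.exp ((2 * ↑π * Complex.I * n) * x)
      ∂(gaussianReal 0 (⟨σ ^ 2, sq_nonneg σ⟩ : NNReal))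
      = Complex.exp ((2 * ↑π * Complex.I * n) ^ 2 * ((⟨σ ^ 2, sq_nonneg σ⟩ : ℝ≥0) : ℝ) / 2) :=
    gaussian_charFun_aux _ hv _
  refine Eq.trans key ?_
  congr 1
  have hI : (2 * (π:ℂ) * Complex.I * n) ^ 2 = -(4 * (π:ℂ) ^ 2 * n ^ 2) := by
    rw [mul_pow, mul_pow, Complex.I_sq]
    ring
  rw [hI]
  push_cast
  ring

/-- A continuous map on the (compact) circle is integrable. -/
lemma cm_integrable_aux (g : C(AddCircle (1:ℝ), ℂ)) (μ : Measure (AddCircle (1:ℝ)))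
    [IsFiniteMeasure μ] : Integrable g μ := by
  exact (BoundedContinuousFunction.mkOfCompact g).integrable μ

/-- Integration against a probability measure is 1-Lipschitz in the sup norm. -/
lemma lipschitz_integral_aux (μ : Measure (AddCircle (1:ℝ))) [IsProbabilityMeasure μ] :
    LipschitzWith 1 (fun g : C(AddCircle (1:ℝ), ℂ) => ∫ x, g x ∂μ) := by
  refine LipschitzWith.of_dist_le_mul fun f g => ?_
  rw [NNReal.coe_one, one_mul, dist_eq_norm, dist_eq_norm]
  rw [← integral_sub (cm_integrable_aux f μ) (cm_integrable_aux g μ)]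
  calc ‖∫ x, (f x - g x) ∂μ‖ ≤ ‖f - g‖ * (μ Set.univ).toReal := by
        refine norm_integral_le_of_norm_le_const (ae_of_all μ fun x => ?_)
        simpa using ContinuousMap.norm_coe_le_norm (f - g) x
    _ = ‖f - g‖ := by simp

/-- Weak convergence of integrals for every continuous complex function on the circle. -/
lemma tendsto_integral_cm_aux (g : C(AddCircle (1:ℝ), ℂ)) :
    Tendsto (fun σ : ℝ => ∫ x, g x ∂(wrappedGaussian σ : Measure (AddCircle (1:ℝ)))) atTop
      (𝓝 (∫ x, g x ∂(uniformCircle : Measure (AddCircle (1:ℝ))))) := by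
  set S : Set C(AddCircle (1:ℝ), ℂ) :=
    {g | Tendsto (fun σ : ℝ => ∫ x, g x ∂(wrappedGaussian σ : Measure (AddCircle (1:ℝ)))) atTop
      (𝓝 (∫ x, g x ∂(uniformCircle : Measure (AddCircle (1:ℝ)))))} with hS
  have hclosed : IsClosed S := by
    have hequi : Equicontinuous (fun σ : ℝ =>
        fun g : C(AddCircle (1:ℝ), ℂ) =>
          ∫ x, g x ∂(wrappedGaussian σ : Measure (AddCircle (1:ℝ)))) := by
      intro f
      refine Metric.equicontinuousAt_iff.mpr fun ε hε => ⟨ε, hε, fun f' hf' σ => ?_⟩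
      calc dist (∫ x, f x ∂(wrappedGaussian σ : Measure (AddCircle (1:ℝ))))
            (∫ x, f' x ∂(wrappedGaussian σ : Measure (AddCircle (1:ℝ))))
          ≤ 1 * dist f f' := (lipschitz_integral_aux _).dist_le_mul f f'
        _ < ε := by rw [one_mul, dist_comm]; exact hf'
    exact hequi.isClosed_setOf_tendsto (lipschitz_integral_aux
      (uniformCircle : Measure (AddCircle (1:ℝ)))).continuous
  have hfourier : ∀ n : ℤ, (fourier n : C(AddCircle (1:ℝ), ℂ)) ∈ S := by
    intro n
    by_cases hn : n = 0
    · subst hn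
      have h1 : ∀ μ : Measure (AddCircle (1:ℝ)), ∀ _ : IsProbabilityMeasure μ,
          ∫ x, (fourier 0 : C(AddCircle (1:ℝ), ℂ)) x ∂μ = 1 := by
        intro μ hμ
        simp [fourier_zero]
      rw [hS, Set.mem_setOf_eq]
      simp only [h1 _ inferInstance]
      exact tendsto_const_nhds
    · rw [hS, Set.mem_setOf_eq, integral_fourier_uniform_aux n hn]
      have hev : (fun σ : ℝ =>
          ∫ x, fourier n x ∂(wrappedGaussian σ : Measure (AddCircle (1:ℝ)))) =ᶠ[atTop]
          fun σ : ℝ => Complex.exp (-(2 * π ^ 2 * n ^ 2 * σ ^ 2)) := by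
        filter_upwards [eventually_ge_atTop (1:ℝ)] with σ hσ
        exact integral_fourier_wrapped_aux n (by linarith : σ ≠ 0)
      refine Tendsto.congr' hev.symm ?_
      have hpos : (0:ℝ) < 2 * π ^ 2 * (n:ℝ) ^ 2 := by
        have : (n:ℝ) ≠ 0 := Int.cast_ne_zero.mpr hn
        positivity
      have h2 : Tendsto (fun σ : ℝ => -(2 * π ^ 2 * (n:ℝ) ^ 2 * σ ^ 2)) atTop atBot := by
        rw [tendsto_neg_atBot_iff]
        exact (tendsto_pow_atTop two_ne_zero).const_mul_atTop hpos
      have h3 : Tendsto (fun σ : ℝ => Real.exp (-(2 * π ^ 2 * (n:ℝ) ^ 2 * σ ^ 2))) atTop (𝓝 0) :=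
        Real.tendsto_exp_atBot.comp h2
      have h4 := (Complex.continuous_ofReal.tendsto 0).comp h3
      refine Tendsto.congr (fun σ => ?_) (by simpa using h4)
      simp only [Function.comp_apply, Complex.ofReal_exp]
      push_cast
      ring_nf
  have hspan : (Submodule.span ℂ (Set.range (@fourier 1)) : Set C(AddCircle (1:ℝ), ℂ)) ⊆ S := by
    intro g hg
    induction hg using Submodule.span_induction with
    | mem f hf =>
      obtain ⟨n, rfl⟩ := hf
      exact hfourier n
    | zero => simp only [hS, Set.mem_setOf_eq]; simp [tendsto_const_nhds]
    | add f₁ f₂ _ _ h₁ h₂ =>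
      rw [hS, Set.mem_setOf_eq] at h₁ h₂ ⊢
      have : ∀ μ : Measure (AddCircle (1:ℝ)), ∀ _ : IsProbabilityMeasure μ,
          ∫ x, (f₁ + f₂) x ∂μ = (∫ x, f₁ x ∂μ) + ∫ x, f₂ x ∂μ := by
        intro μ hμ
        simp only [ContinuousMap.add_apply]
        exact integral_add (cm_integrable_aux f₁ μ) (cm_integrable_aux f₂ μ)
      simp only [this _ inferInstance]
      exact h₁.add h₂
    | smul c f _ h =>
      rw [hS, Set.mem_setOf_eq] at h ⊢
      have : ∀ μ : Measure (AddCircle (1:ℝ)),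
          ∫ x, (c • f) x ∂μ = c • ∫ x, f x ∂μ := by
        intro μ
        simp only [ContinuousMap.smul_apply]
        exact integral_smul c _
      simp only [this]
      exact h.const_smul c
  have htop : g ∈ closure (Submodule.span ℂ (Set.range (@fourier 1)) : Set C(AddCircle (1:ℝ), ℂ)) := by
    have := span_fourier_closure_eq_top (T := 1)
    rw [← Submodule.topologicalClosure_coe, this]
    trivial
  exact closure_minimal hspan hclosed htop

end Aux

/-- The wrapped centered Gaussian distribution on the circle converges weakly to the uniform
(Haar) distribution as the standard deviation tends to infinity. -/
theorem wrappedGaussian_tendsto_uniform :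
    Tendsto wrappedGaussian atTop (𝓝 uniformCircle) := by
  rw [ProbabilityMeasure.tendsto_iff_forall_integral_tendsto]
  intro f
  set g : C(AddCircle (1:ℝ), ℂ) :=
    ⟨fun x => (f x : ℂ), Complex.continuous_ofReal.comp f.continuous⟩ with hg
  have h := tendsto_integral_cm_aux g
  have hcoe : ∀ μ : Measure (AddCircle (1:ℝ)), ∀ _ : IsFiniteMeasure μ,
      ∫ x, g x ∂μ = ((∫ x, f x ∂μ : ℝ) : ℂ) := by
    intro μ hμ
    exact integral_ofReal
  simp only [hcoe _ inferInstance] at h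
  have h2 := (Complex.continuous_re.tendsto _).comp h
  simpa [Function.comp_def] using h2
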